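/- Let C be a left- and right-cancellative category and S a Garside family in C. Then in the conjugacy category Ad C (whose objects are the endomorphisms of C and whose morphisms from w to w' are the morphisms x of C with x ≫ w' = w ≫ x), the set of those morphisms of Ad C whose underlying morphism in C belongs to S is a Garside family in Ad C. -/

import Mathlib

open CategoryTheory

/-- `f` left-divides `g` (both with source `X`). -/
def LDivides {C : Type*} [Category C] {X Y Z : C} (f : X ⟶ Y) (g : X ⟶ Z) : Prop :=
  ∃ h : Y ⟶ Z, g = f ≫ h

/-- `IsCompositeOf S f` means that `f` is a (possibly empty) composite of morphisms
belonging to the class `S`. -/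
inductive IsCompositeOf {C : Type*} [Category C]
    (S : ∀ ⦃X Y : C⦄, (X ⟶ Y) → Prop) : ∀ ⦃X Y : C⦄, (X ⟶ Y) → Prop
  | id (X : C) : IsCompositeOf S (𝟙 X)
  | of {X Y : C} {f : X ⟶ Y} : S f → IsCompositeOf S f
  | comp {X Y Z : C} {f : X ⟶ Y} {g : Y ⟶ Z} :
      IsCompositeOf S f → IsCompositeOf S g → IsCompositeOf S (f ≫ g)

/-- `S` is a Garside family: `S` together with the invertible morphisms generates `C`;
`Isom C ∘ S ⊆ S ∘ Isom C ∪ Isom C`; and every composite of two non-invertible elements of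
`S` is in `S ∘ Isom C` or admits an `S`-normal decomposition of length two. -/
def IsGarsideFamily {C : Type*} [Category C]
    (S : ∀ ⦃X Y : C⦄, (X ⟶ Y) → Prop) : Prop :=
  (∀ {X Y : C} (f : X ⟶ Y),
      IsCompositeOf (fun ⦃X' Y'⦄ (g : X' ⟶ Y') => S g ∨ IsIso g) f) ∧
  (∀ {X Y Z : C} (ε : X ⟶ Y) (f : Y ⟶ Z), IsIso ε → S f →
      (∃ (W : C) (g : X ⟶ W) (ε' : W ⟶ Z), S g ∧ IsIso ε' ∧ ε ≫ f = g ≫ ε') ∨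
        IsIso (ε ≫ f)) ∧
  (∀ {X Y Z : C} (f : X ⟶ Y) (g : Y ⟶ Z), S f → S g → ¬ IsIso f → ¬ IsIso g →
      (∃ (W : C) (h : X ⟶ W) (ε : W ⟶ Z), S h ∧ IsIso ε ∧ f ≫ g = h ≫ ε) ∨
      (∃ (Y₁ : C) (f₁ : X ⟶ Y₁) (g₁ : Y₁ ⟶ Z), f ≫ g = f₁ ≫ g₁ ∧ S f₁ ∧
        (∃ (W : C) (h : Y₁ ⟶ W) (ε : W ⟶ Z), S h ∧ IsIso ε ∧ g₁ = h ≫ ε) ∧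
        ¬ IsIso g₁ ∧
        ∀ {V U : C} (k : V ⟶ X) (h : V ⟶ U), S h →
          LDivides h (k ≫ f₁ ≫ g₁) → LDivides h (k ≫ f₁)))

/-- Objects of the conjugacy category of `C`: endomorphisms of `C`. -/
def AdObj (C : Type*) [Category C] : Type _ := Σ A : C, A ⟶ A

/-- The conjugacy category `Ad C`: objects are endomorphisms `w : A ⟶ A` of `C`, and a
morphism from `w` to `w'` is a morphism `x` of `C` with `x ≫ w' = w ≫ x`. -/
instance AdObj.category {C : Type*} [Category C] : Category (AdObj C) where
  Hom w w' := {x : w.1 ⟶ w'.1 // x ≫ w'.2 = w.2 ≫ x}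
  id w := ⟨𝟙 w.1, by simp⟩
  comp {w w' w''} f g := ⟨f.1 ≫ g.1, by
    rw [Category.assoc, g.2, ← Category.assoc, f.2, Category.assoc]⟩
  id_comp f := Subtype.ext (by simp)
  comp_id f := Subtype.ext (by simp)
  assoc f g h := Subtype.ext (by simp)

namespace GarsideConj

variable {C : Type*} [Category C]

section Defs
variable (S : ∀ ⦃X Y : C⦄, (X ⟶ Y) → Prop)

/-- Strong greediness of `s` with respect to `a`. -/
def Greedy {A M B : C} (s : A ⟶ M) (a : M ⟶ B) : Prop :=
  ∀ {V U : C} (k : V ⟶ A) (u : V ⟶ U), S u → LDivides u (k ≫ s ≫ a) → LDivides u (k ≫ s)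

/-- Normal decompositions: sequence of greedy non-invertible `S`-letters followed by an iso. -/
inductive GNorm : ∀ {A B : C}, (A ⟶ B) → Prop
  | base {A B : C} {x : A ⟶ B} : IsIso x → GNorm x
  | cons {A M B : C} {s : A ⟶ M} {y : M ⟶ B} : S s → ¬ IsIso s → Greedy S s y →
      GNorm y → GNorm (s ≫ y)

end Defs

variable {S : ∀ ⦃X Y : C⦄, (X ⟶ Y) → Prop}

lemma _root_.LDivides.of_eq {X Y Z : C} {u : X ⟶ Y} {x y : X ⟶ Z} (h : LDivides u x) (e : x = y) :
    LDivides u y := e ▸ h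

lemma ldiv_of_comp_isIso {V U W W' : C} {u : V ⟶ U} {x : V ⟶ W} {ε : W ⟶ W'} (hε : IsIso ε)
    (h : LDivides u (x ≫ ε)) : LDivides u x := by
  haveI := hε
  obtain ⟨m, hm⟩ := h
  exact ⟨m ≫ inv ε, by rw [← Category.assoc, ← hm, Category.assoc, IsIso.hom_inv_id,
    Category.comp_id]⟩

lemma isIso_left_of_comp
    (hr : ∀ {X Y Z : C} (f h : X ⟶ Y) (g : Y ⟶ Z), f ≫ g = h ≫ g → f = h)
    {X Y Z : C} {f : X ⟶ Y} {g : Y ⟶ Z} (h : IsIso (f ≫ g)) : IsIso f := by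
  haveI := h
  refine ⟨⟨g ≫ inv (f ≫ g), ?_, ?_⟩⟩
  · rw [← Category.assoc, IsIso.hom_inv_id]
  · apply hr _ _ g
    simp

lemma gnorm_extract {A B : C} {x : A ⟶ B} (h : GNorm S x) (hx : ¬ IsIso x) :
    ∃ (N : C) (t : A ⟶ N) (a : N ⟶ B),
      x = t ≫ a ∧ S t ∧ ¬ IsIso t ∧ Greedy S t a ∧ GNorm S a := by
  cases h with
  | base h => exact absurd h hx
  | cons hs hni hg hn => exact ⟨_, _, _, rfl, hs, hni, hg, hn⟩


section GB
variable (hb : ∀ {X Y Z : C} (ε : X ⟶ Y) (f : Y ⟶ Z), IsIso ε → S f →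
      (∃ (W : C) (g : X ⟶ W) (ε' : W ⟶ Z), S g ∧ IsIso ε' ∧ ε ≫ f = g ≫ ε') ∨
        IsIso (ε ≫ f))

include hb in
lemma gnorm_isIso_comp {M B : C} {x : M ⟶ B} (hx : GNorm S x) :
    ∀ {A : C} (ε : A ⟶ M), IsIso ε → GNorm S (ε ≫ x) := by
  induction hx with
  | base h =>
    intro A ε hε
    haveI := h; haveI := hε
    exact .base inferInstance
  | @cons M M₂ B s y hs hni hgr hn IH =>
    intro A ε hε
    haveI := hε
    rcases hb ε s hε hs with ⟨W, g, ε'', hg, hε'', heq⟩ | hiso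
    · haveI := hε''
      have hgni : ¬ IsIso g := by
        intro h
        apply hni
        have hse : s = inv ε ≫ (g ≫ ε'') := by rw [← heq, ← Category.assoc, IsIso.inv_hom_id,
          Category.id_comp]
        rw [hse]
        haveI := h
        infer_instance
      have he2 : ε ≫ s ≫ y = g ≫ ε'' ≫ y := by
        rw [← Category.assoc, heq, Category.assoc]
      rw [he2]
      refine .cons hg hgni ?_ (IH ε'' hε'')
      intro V U k u hu hdiv
      have h1 : k ≫ g ≫ ε'' ≫ y = (k ≫ ε) ≫ s ≫ y := by
        simp only [Category.assoc]
        rw [← reassoc_of% heq]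
      have h2 := hgr (k ≫ ε) u hu (hdiv.of_eq h1)
      have h3 : (k ≫ ε) ≫ s = (k ≫ g) ≫ ε'' := by
        simp only [Category.assoc]
        rw [heq]
      exact (ldiv_of_comp_isIso hε'' (h2.of_eq h3)).of_eq (by simp only [Category.assoc])
    · exfalso
      apply hni
      have hse : s = inv ε ≫ (ε ≫ s) := by simp
      rw [hse]
      haveI := hiso
      infer_instance

end GB


section GC
variable (hr : ∀ {X Y Z : C} (f h : X ⟶ Y) (g : Y ⟶ Z), f ≫ g = h ≫ g → f = h)
variable (hb : ∀ {X Y Z : C} (ε : X ⟶ Y) (f : Y ⟶ Z), IsIso ε → S f →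
      (∃ (W : C) (g : X ⟶ W) (ε' : W ⟶ Z), S g ∧ IsIso ε' ∧ ε ≫ f = g ≫ ε') ∨
        IsIso (ε ≫ f))
variable (hc3 : ∀ {X Y Z : C} (f : X ⟶ Y) (g : Y ⟶ Z), S f → S g → ¬ IsIso f → ¬ IsIso g →
      (∃ (W : C) (h : X ⟶ W) (ε : W ⟶ Z), S h ∧ IsIso ε ∧ f ≫ g = h ≫ ε) ∨
      (∃ (Y₁ : C) (f₁ : X ⟶ Y₁) (g₁ : Y₁ ⟶ Z), f ≫ g = f₁ ≫ g₁ ∧ S f₁ ∧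
        (∃ (W : C) (h : Y₁ ⟶ W) (ε : W ⟶ Z), S h ∧ IsIso ε ∧ g₁ = h ≫ ε) ∧
        ¬ IsIso g₁ ∧
        ∀ {V U : C} (k : V ⟶ X) (h : V ⟶ U), S h →
          LDivides h (k ≫ f₁ ≫ g₁) → LDivides h (k ≫ f₁)))

include hr hb hc3 in
lemma gnorm_mul {M B : C} {y : M ⟶ B} (hy : GNorm S y) :
    ∀ {A M₀ : C} (s : A ⟶ M₀) (ε : M₀ ⟶ M), S s → ¬ IsIso s → IsIso ε →
    ∃ (N : C) (t : A ⟶ N) (a : N ⟶ B),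
      s ≫ ε ≫ y = t ≫ a ∧ S t ∧ ¬ IsIso t ∧ Greedy S t a ∧ GNorm S a := by
  induction hy with
  | @base M B y h =>
    intro A M₀ s ε hs hnis hε
    haveI := h; haveI := hε
    refine ⟨M₀, s, ε ≫ y, rfl, hs, hnis, ?_, .base inferInstance⟩
    intro V U k u hu hdiv
    have h1 : k ≫ s ≫ ε ≫ y = (k ≫ s) ≫ (ε ≫ y) := by simp only [Category.assoc]
    exact ldiv_of_comp_isIso inferInstance (hdiv.of_eq h1)
  | @cons M M₁ B t₁ z ht₁ hnit₁ hgr hn IH =>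
    intro A M₀ s ε hs hnis hε
    haveI := hε
    rcases hb ε t₁ hε ht₁ with ⟨W, t₁', ε', ht₁', hε', heq⟩ | hiso
    swap
    · exfalso
      apply hnit₁
      have : t₁ = inv ε ≫ (ε ≫ t₁) := by simp
      rw [this]; haveI := hiso; infer_instance
    haveI := hε'
    have hnit₁' : ¬ IsIso t₁' := by
      intro h
      apply hnit₁
      have : t₁ = inv ε ≫ (t₁' ≫ ε') := by rw [← heq, ← Category.assoc, IsIso.inv_hom_id,
        Category.id_comp]
      rw [this]; haveI := h; infer_instance
    rcases hc3 s t₁' hs ht₁' hnis hnit₁' with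
      ⟨W₃, h, ε₃, hh, hε₃, heq₂⟩ |
      ⟨Y₁, f₁, g₁, heq₂, hf₁, ⟨W₂, h₂, ε₂, hh₂, hε₂, hg₁⟩, hnig₁, hq₁⟩
    · -- s ≫ t₁' = h ≫ ε₃ : absorbed
      haveI := hε₃
      have hnih : ¬ IsIso h := by
        intro hih
        apply hnis
        have : IsIso (s ≫ t₁') := by rw [heq₂]; haveI := hih; infer_instance
        exact isIso_left_of_comp hr this
      refine ⟨W₃, h, (ε₃ ≫ ε') ≫ z, ?_, hh, hnih, ?_, ?_⟩
      · rw [reassoc_of% heq, reassoc_of% heq₂]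
        simp only [Category.assoc]
      · intro V U k u hu hdiv
        have e1 : k ≫ h ≫ (ε₃ ≫ ε') ≫ z = (k ≫ s ≫ ε) ≫ t₁ ≫ z := by
          simp only [Category.assoc]
          rw [← reassoc_of% heq₂, ← reassoc_of% heq]
        have h2 := hgr (k ≫ s ≫ ε) u hu (hdiv.of_eq e1)
        have e2 : (k ≫ s ≫ ε) ≫ t₁ = (k ≫ h) ≫ (ε₃ ≫ ε') := by
          simp only [Category.assoc]
          rw [heq, ← reassoc_of% heq₂]
        have h3 : IsIso (ε₃ ≫ ε') := inferInstance
        exact (ldiv_of_comp_isIso h3 (h2.of_eq e2)).of_eq (by simp only [Category.assoc])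
      · exact gnorm_isIso_comp hb hn _ inferInstance
    · -- s ≫ t₁' = f₁ ≫ g₁ left-weighted, g₁ = h₂ ≫ ε₂
      haveI := hε₂
      have hnih₂ : ¬ IsIso h₂ := by
        intro hih
        apply hnig₁
        rw [hg₁]; haveI := hih; infer_instance
      obtain ⟨N, t₂, a₂, heq₃, ht₂, hnit₂, hgr₂, hna₂⟩ :=
        IH h₂ (ε₂ ≫ ε') hh₂ hnih₂ inferInstance
      have key : s ≫ ε ≫ t₁ ≫ z = f₁ ≫ h₂ ≫ (ε₂ ≫ ε') ≫ z := by
        rw [reassoc_of% heq, reassoc_of% heq₂, hg₁]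
        simp only [Category.assoc]
      have hgf : Greedy S f₁ (t₂ ≫ a₂) := by
        intro V U k u hu hdiv
        have e1 : k ≫ f₁ ≫ t₂ ≫ a₂ = (k ≫ s ≫ ε) ≫ t₁ ≫ z := by
          simp only [Category.assoc]
          rw [← heq₃, reassoc_of% heq, reassoc_of% heq₂, hg₁]
          simp only [Category.assoc]
        have h2 := hgr (k ≫ s ≫ ε) u hu (hdiv.of_eq e1)
        have e2 : (k ≫ s ≫ ε) ≫ t₁ = (k ≫ f₁ ≫ g₁) ≫ ε' := by
          simp only [Category.assoc]
          rw [heq, ← reassoc_of% heq₂]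
        have h3 := ldiv_of_comp_isIso hε' (h2.of_eq e2)
        exact hq₁ k u hu (h3.of_eq (by simp only [Category.assoc]))
      by_cases hf₁iso : IsIso f₁
      · haveI := hf₁iso
        have hn2 : GNorm S (t₂ ≫ a₂) := .cons ht₂ hnit₂ hgr₂ hna₂
        have hn3 : GNorm S (f₁ ≫ t₂ ≫ a₂) := gnorm_isIso_comp hb hn2 f₁ hf₁iso
        have hni3 : ¬ IsIso (f₁ ≫ t₂ ≫ a₂) := by
          intro h'
          apply hnit₂
          have : t₂ ≫ a₂ = inv f₁ ≫ (f₁ ≫ t₂ ≫ a₂) := by simp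
          have h4 : IsIso (t₂ ≫ a₂) := by rw [this]; haveI := h'; infer_instance
          exact isIso_left_of_comp hr h4
        obtain ⟨N', t', a', e', ht', hnit', hgr', hna'⟩ := gnorm_extract hn3 hni3
        refine ⟨N', t', a', ?_, ht', hnit', hgr', hna'⟩
        rw [key, ← e', ← heq₃]
      · refine ⟨Y₁, f₁, t₂ ≫ a₂, ?_, hf₁, hf₁iso, hgf, .cons ht₂ hnit₂ hgr₂ hna₂⟩
        rw [key, ← heq₃]

include hr hb hc3 in
lemma gnorm_comp {A B : C} {f : A ⟶ B} (hf : GNorm S f) :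
    ∀ {D : C} {g : B ⟶ D}, GNorm S g → GNorm S (f ≫ g) := by
  induction hf with
  | base h =>
    intro D g hg
    exact gnorm_isIso_comp hb hg _ h
  | @cons A M B s y hs hni hgr hn IH =>
    intro D g hg
    obtain ⟨N, t, a, e, ht, hnit, hgrt, hna⟩ :=
      gnorm_mul hr hb hc3 (IH hg) s (𝟙 M) hs hni inferInstance
    have e2 : (s ≫ y) ≫ g = t ≫ a := by
      rw [← e]; simp
    rw [e2]
    exact .cons ht hnit hgrt hna

include hr hb hc3 in
lemma gnorm_of_comp {A B : C} {x : A ⟶ B}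
    (h : IsCompositeOf (fun ⦃X' Y'⦄ (g : X' ⟶ Y') => S g ∨ IsIso g) x) : GNorm S x := by
  induction h with
  | id X => exact .base inferInstance
  | @of X Y f h =>
    rcases h with hs | hiso
    · by_cases hi : IsIso f
      · exact .base hi
      · have hgr : Greedy S f (𝟙 Y) := by
          intro V U k u hu hdiv
          exact hdiv.of_eq (by simp)
        have : GNorm S (f ≫ 𝟙 Y) := .cons hs hi hgr (.base inferInstance)
        simpa using this
    · exact .base hiso
  | comp h1 h2 IH1 IH2 => exact gnorm_comp hr hb hc3 IH1 IH2

end GC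

end GarsideConj

namespace GarsideConj

variable {C : Type*} [Category C]

lemma ad_isIso {w w' : AdObj C} {f : w ⟶ w'} (h : IsIso f.1) : IsIso f := by
  haveI := h
  have hcond : inv f.1 ≫ w.2 = w'.2 ≫ inv f.1 := by
    rw [IsIso.inv_comp_eq, ← Category.assoc, f.2, Category.assoc, IsIso.hom_inv_id,
      Category.comp_id]
  refine ⟨⟨⟨inv f.1, hcond⟩, ?_, ?_⟩⟩
  · exact Subtype.ext (IsIso.hom_inv_id f.1)
  · exact Subtype.ext (IsIso.inv_hom_id f.1)

lemma ad_isIso_val {w w' : AdObj C} {f : w ⟶ w'} (h : IsIso f) : IsIso f.1 := by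
  obtain ⟨g, hg1, hg2⟩ := h.out
  exact ⟨⟨g.1, congrArg Subtype.val hg1, congrArg Subtype.val hg2⟩⟩

/-- Make an object of `Ad C`. -/
def mkAd (A : C) (w : A ⟶ A) : AdObj C := ⟨A, w⟩

variable {S : ∀ ⦃X Y : C⦄, (X ⟶ Y) → Prop}

lemma lift_gnorm
    (hl : ∀ {X Y Z : C} (g : X ⟶ Y) (f h : Y ⟶ Z), g ≫ f = g ≫ h → f = h)
    {A B : C} {x : A ⟶ B} (hx : GNorm S x) :
    ∀ (w : A ⟶ A) (w' : B ⟶ B) (hcom : x ≫ w' = w ≫ x),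
    IsCompositeOf (C := AdObj C) (fun ⦃p q : AdObj C⦄ (f : p ⟶ q) => S f.1 ∨ IsIso f)
      (X := mkAd A w) (Y := mkAd B w') ⟨x, hcom⟩ := by
  induction hx with
  | base h =>
    intro w w' hcom
    exact .of (Or.inr (ad_isIso h))
  | @cons A M B s y hs hni hgr hn IH =>
    intro w w' hcom
    have hd : LDivides s (w ≫ s) := by
      refine hgr w s hs ⟨y ≫ w', ?_⟩
      rw [← hcom]
      simp only [Category.assoc]
    obtain ⟨v, hv⟩ := hd
    have hy : y ≫ w' = v ≫ y := by
      apply hl s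
      rw [← Category.assoc, hcom, ← Category.assoc, hv, Category.assoc]
    have h1 : IsCompositeOf (C := AdObj C) (fun ⦃p q : AdObj C⦄ (f : p ⟶ q) => S f.1 ∨ IsIso f)
        (X := mkAd A w) (Y := mkAd M v) ⟨s, hv.symm⟩ := .of (Or.inl hs)
    exact h1.comp (IH v w' hy)

end GarsideConj

/-- If `S` is a Garside family in a left- and right-cancellative category `C`, then the
morphisms of the conjugacy category `Ad C` whose underlying morphism lies in `S` form a
Garside family in `Ad C`. -/
theorem garside_family_in_conjugacy_category
    {C : Type*} [Category C]
    (hl : ∀ {X Y Z : C} (g : X ⟶ Y) (f h : Y ⟶ Z), g ≫ f = g ≫ h → f = h)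
    (hr : ∀ {X Y Z : C} (f h : X ⟶ Y) (g : Y ⟶ Z), f ≫ g = h ≫ g → f = h)
    (S : ∀ ⦃X Y : C⦄, (X ⟶ Y) → Prop)
    (hS : IsGarsideFamily S) :
    IsGarsideFamily (C := AdObj C) (fun ⦃w w'⦄ (f : w ⟶ w') => S f.1) := by
  obtain ⟨h1, h2, h3⟩ := hS
  open GarsideConj in
  refine ⟨?_, ?_, ?_⟩
  · -- (a) generation
    intro X Y f
    have h0 : GNorm S f.1 := gnorm_of_comp hr @h2 @h3 (h1 f.1)
    exact lift_gnorm hl h0 X.2 Y.2 f.2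
  · -- (b) Isom ∘ S ⊆ S ∘ Isom ∪ Isom
    intro X Y Z ε f hε hf
    have hε1 : IsIso ε.1 := ad_isIso_val hε
    rcases h2 ε.1 f.1 hε1 hf with ⟨W, g, ε', hg, hε', heq⟩ | hiso
    · haveI := hε'
      left
      have hconj : (ε.1 ≫ f.1) ≫ Z.2 = X.2 ≫ (ε.1 ≫ f.1) := by
        rw [Category.assoc, f.2, ← Category.assoc, ε.2, Category.assoc]
      have e0 : (g ≫ ε') ≫ Z.2 = X.2 ≫ (g ≫ ε') := by rw [← heq]; exact hconj
      have hgv : g ≫ (ε' ≫ Z.2 ≫ inv ε') = X.2 ≫ g := by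
        calc g ≫ ε' ≫ Z.2 ≫ inv ε' = ((g ≫ ε') ≫ Z.2) ≫ inv ε' := by
              simp only [Category.assoc]
          _ = (X.2 ≫ (g ≫ ε')) ≫ inv ε' := by rw [e0]
          _ = X.2 ≫ g := by simp
      refine ⟨⟨W, ε' ≫ Z.2 ≫ inv ε'⟩, ⟨g, hgv⟩, ⟨ε', by simp⟩, hg, ad_isIso hε', ?_⟩
      exact Subtype.ext heq
    · right
      exact ad_isIso (f := ε ≫ f) hiso
  · -- (c) normality of length-two products
    intro X Y Z f g hf hg hnf hng
    have hnf1 : ¬ IsIso f.1 := fun h => hnf (ad_isIso h)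
    have hng1 : ¬ IsIso g.1 := fun h => hng (ad_isIso h)
    have hconj : (f.1 ≫ g.1) ≫ Z.2 = X.2 ≫ (f.1 ≫ g.1) := by
      rw [Category.assoc, g.2, ← Category.assoc, f.2, Category.assoc]
    rcases h3 f.1 g.1 hf hg hnf1 hng1 with
      ⟨W, h, ε, hh, hε, heq⟩ |
      ⟨Y₁, f₁, g₁, heq, hf₁, ⟨W, h₂, ε₂, hh₂, hε₂, hg₁⟩, hnig₁, hq⟩
    · haveI := hε
      left
      have e0 : (h ≫ ε) ≫ Z.2 = X.2 ≫ (h ≫ ε) := by rw [← heq]; exact hconj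
      have hhv : h ≫ (ε ≫ Z.2 ≫ inv ε) = X.2 ≫ h := by
        calc h ≫ ε ≫ Z.2 ≫ inv ε = ((h ≫ ε) ≫ Z.2) ≫ inv ε := by
              simp only [Category.assoc]
          _ = (X.2 ≫ (h ≫ ε)) ≫ inv ε := by rw [e0]
          _ = X.2 ≫ h := by simp
      refine ⟨⟨W, ε ≫ Z.2 ≫ inv ε⟩, ⟨h, hhv⟩, ⟨ε, by simp⟩, hh, ad_isIso hε, ?_⟩
      exact Subtype.ext heq
    · right
      have e1 : X.2 ≫ f₁ ≫ g₁ = f₁ ≫ g₁ ≫ Z.2 := by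
        calc X.2 ≫ f₁ ≫ g₁ = X.2 ≫ (f.1 ≫ g.1) := by rw [heq]
          _ = (f.1 ≫ g.1) ≫ Z.2 := hconj.symm
          _ = (f₁ ≫ g₁) ≫ Z.2 := by rw [heq]
          _ = f₁ ≫ g₁ ≫ Z.2 := by simp only [Category.assoc]
      obtain ⟨v, hv⟩ : LDivides f₁ (X.2 ≫ f₁) := hq X.2 f₁ hf₁ ⟨g₁ ≫ Z.2, by
        rw [e1]⟩
      -- hv : X.2 ≫ f₁ = f₁ ≫ v
      have hg₁v : g₁ ≫ Z.2 = v ≫ g₁ := by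
        apply hl f₁
        calc f₁ ≫ g₁ ≫ Z.2 = X.2 ≫ f₁ ≫ g₁ := e1.symm
          _ = (X.2 ≫ f₁) ≫ g₁ := by simp only [Category.assoc]
          _ = (f₁ ≫ v) ≫ g₁ := by rw [hv]
          _ = f₁ ≫ v ≫ g₁ := by simp only [Category.assoc]
      haveI := hε₂
      have e2 : (h₂ ≫ ε₂) ≫ Z.2 = v ≫ (h₂ ≫ ε₂) := by rw [← hg₁]; exact hg₁v
      have hh₂v : h₂ ≫ (ε₂ ≫ Z.2 ≫ inv ε₂) = v ≫ h₂ := by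
        calc h₂ ≫ ε₂ ≫ Z.2 ≫ inv ε₂ = ((h₂ ≫ ε₂) ≫ Z.2) ≫ inv ε₂ := by
              simp only [Category.assoc]
          _ = (v ≫ (h₂ ≫ ε₂)) ≫ inv ε₂ := by rw [e2]
          _ = v ≫ h₂ := by simp
      refine ⟨⟨Y₁, v⟩, ⟨f₁, hv.symm⟩, ⟨g₁, hg₁v⟩, Subtype.ext heq, hf₁,
        ⟨⟨W, ε₂ ≫ Z.2 ≫ inv ε₂⟩, ⟨h₂, hh₂v⟩, ⟨ε₂, by simp⟩, hh₂, ad_isIso hε₂,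
          Subtype.ext hg₁⟩, ?_, ?_⟩
      · intro hI
        exact hnig₁ (ad_isIso_val hI)
      · intro V U k t hSt hdivt
        obtain ⟨m', hm'⟩ := hdivt
        have hm'1 : k.1 ≫ f₁ ≫ g₁ = t.1 ≫ m'.1 := congrArg Subtype.val hm'
        obtain ⟨m, hm⟩ := hq k.1 t.1 hSt ⟨m'.1, hm'1⟩
        -- hm : k.1 ≫ f₁ = t.1 ≫ m
        have hmconj : m ≫ v = U.2 ≫ m := by
          apply hl t.1
          calc t.1 ≫ m ≫ v = (t.1 ≫ m) ≫ v := by simp only [Category.assoc]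
            _ = (k.1 ≫ f₁) ≫ v := by rw [← hm]
            _ = k.1 ≫ f₁ ≫ v := by simp only [Category.assoc]
            _ = k.1 ≫ X.2 ≫ f₁ := by rw [← hv]
            _ = (k.1 ≫ X.2) ≫ f₁ := by simp only [Category.assoc]
            _ = (V.2 ≫ k.1) ≫ f₁ := by rw [k.2]
            _ = V.2 ≫ k.1 ≫ f₁ := by simp only [Category.assoc]
            _ = V.2 ≫ t.1 ≫ m := by rw [hm]
            _ = (V.2 ≫ t.1) ≫ m := by simp only [Category.assoc]
            _ = (t.1 ≫ U.2) ≫ m := by rw [← t.2]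
            _ = t.1 ≫ U.2 ≫ m := by simp only [Category.assoc]
        exact ⟨⟨m, hmconj⟩, Subtype.ext hm⟩
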